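/- Let F be a cumulative distribution function that is differentiable at k with F(k) = a ∈ (0,1) and F'(k) = b > 0, suppose ln(1 − F) is concave on {x : F(x) < 1}, and let x ∈ (0, 1 − a). Then (1/x)·∫_a^{a+x} Q(u) du ≤ k − g(1 − a, b, −x), where Q is the quantile function of F. -/

import Mathlib

/-- A cumulative distribution function: monotone, right-continuous, with limits
0 at `-∞` and 1 at `+∞`. -/
def IsCDF (F : ℝ → ℝ) : Prop :=
  Monotone F ∧ (∀ x, ContinuousWithinAt F (Set.Ici x) x) ∧
    Filter.Tendsto F Filter.atBot (nhds 0) ∧ Filter.Tendsto F Filter.atTop (nhds 1)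

/-- The quantile function of a CDF: `Q(u) = inf {x | F x ≥ u}`. -/
noncomputable def quantile (F : ℝ → ℝ) (u : ℝ) : ℝ := sInf {x | u ≤ F x}

/-- The function `g(a,b,x) = (a/(b·x))·(a+x)·ln(1 + x/a) - a/b` from the
paper's Theorem 1. -/
noncomputable def g (a b x : ℝ) : ℝ :=
  a / (b * x) * (a + x) * Real.log (1 + x / a) - a / b

/-- Integrated survival-log-concavity bound (building block for the upper bound
of the paper's Theorem 1): if `F k = a ∈ (0,1)`, `F' k = b > 0` and `ln(1 - F)`
is concave on `{F < 1}`, then for `x ∈ (0, 1-a)` the average of the quantile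
function over `[a, a+x]` is at most `k - g(1-a, b, -x)`. -/
theorem stmt8 (F : ℝ → ℝ) (hcdf : IsCDF F) (k a b : ℝ)
    (ha : a ∈ Set.Ioo (0 : ℝ) 1) (hb : 0 < b)
    (hFk : F k = a) (hderiv : HasDerivAt F b k)
    (hlc : ConcaveOn ℝ {x | F x < 1} (fun x => Real.log (1 - F x)))
    (x : ℝ) (hx : x ∈ Set.Ioo 0 (1 - a)) :
    (1 / x) * ∫ u in a..(a + x), quantile F u ≤ k - g (1 - a) b (-x) := by
  obtain ⟨ha0, ha1⟩ := ha
  obtain ⟨hx0, hx1⟩ := hx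
  obtain ⟨hmono, _, hbot, htop⟩ := hcdf
  set c : ℝ := 1 - a with hc
  have hc0 : 0 < c := by linarith
  have hcx : 0 < c - x := by linarith
  -- bounded below of quantile sets
  have hbdd : ∀ u : ℝ, 0 < u → BddBelow {z | u ≤ F z} := by
    intro u hu
    obtain ⟨y, hy⟩ := (hbot.eventually (eventually_lt_nhds hu)).exists
    refine ⟨y, fun z hz => ?_⟩
    by_contra h
    exact absurd (le_trans hz (hmono (le_of_not_ge h))) (not_le.2 hy)
  -- nonempty of quantile sets
  have hne : ∀ u : ℝ, u < 1 → Set.Nonempty {z | u ≤ F z} := by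
    intro u hu
    obtain ⟨y, hy⟩ := (htop.eventually (eventually_gt_nhds hu)).exists
    exact ⟨y, le_of_lt hy⟩
  -- the bounding function
  set φ : ℝ → ℝ := fun u => k - (c / b) * Real.log ((1 - u) / c) with hφ
  -- pointwise bound
  have hpt : ∀ u ∈ Set.Icc a (a + x), quantile F u ≤ φ u := by
    intro u ⟨hua, hux⟩
    have hu1 : u < 1 := by linarith
    have hu0 : 0 < u := by linarith
    have h1u : 0 < 1 - u := by linarith
    set t₀ : ℝ := φ u with ht₀
    have hlog_le : Real.log ((1 - u) / c) ≤ 0 := by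
      apply Real.log_nonpos (by positivity)
      rw [div_le_one hc0]; linarith
    have hkt : k ≤ t₀ := by
      have h0 : 0 ≤ (c / b) * (-Real.log ((1 - u) / c)) :=
        mul_nonneg (by positivity) (by linarith)
      simp only [ht₀, hφ]; nlinarith
    have hmem : u ≤ F t₀ := by
      by_contra hcon
      push_neg at hcon
      have ht₀S : t₀ ∈ {z | F z < 1} := by simp only [Set.mem_setOf_eq]; linarith
      have hkS : k ∈ {z | F z < 1} := by simp only [Set.mem_setOf_eq, hFk]; linarith
      have hder : HasDerivAt (fun t => Real.log (1 - F t)) (-b / c) k := by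
        have h1 : HasDerivAt (fun t => 1 - F t) (-b) k := by
          have := (hasDerivAt_const k (1:ℝ)).sub hderiv; rw [zero_sub] at this; exact this
        have := h1.log (by rw [hFk]; exact ne_of_gt (by linarith))
        simpa [hFk] using this
      rcases eq_or_lt_of_le hkt with heq | hlt
      · -- t₀ = k : then log((1-u)/c) = 0 so u = a and F t₀ = a
        have hz : (c / b) * Real.log ((1 - u) / c) = 0 := by
          simp only [ht₀, hφ] at heq; linarith
        have hl0 : Real.log ((1 - u) / c) = 0 := by
          rcases mul_eq_zero.1 hz with h | h
          · exact absurd h (by positivity)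
          · exact h
        have hone : (1 - u) / c = 1 := by
          rcases Real.log_eq_zero.1 hl0 with h | h | h
          · exact absurd h (by positivity)
          · exact h
          · exfalso; have h1 : (0:ℝ) < (1 - u) / c := by positivity
            linarith
        have hua' : u = a := by
          field_simp at hone; linarith
        rw [← heq, hFk, hua'] at hcon
        exact lt_irrefl _ hcon
      · have hslope := hlc.slope_le_of_hasDerivAt hkS ht₀S hlt hder
        rw [slope_def_field] at hslope
        have hdiff : t₀ - k = -(c / b) * Real.log ((1 - u) / c) := by
          simp only [ht₀, hφ]; ring
        have hlogt : Real.log (1 - F t₀) ≤ Real.log (1 - u) := by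
          have hck : (0:ℝ) < t₀ - k := by linarith
          have h2 : Real.log (1 - F t₀) - Real.log (1 - F k) ≤ (-b / c) * (t₀ - k) :=
            (div_le_iff₀ hck).1 hslope
          have h3 : (-b / c) * (t₀ - k) = Real.log ((1 - u) / c) := by
            rw [hdiff]; field_simp
          rw [hFk] at h2
          have h4 : Real.log ((1 - u) / c) = Real.log (1 - u) - Real.log c := by
            rw [Real.log_div (ne_of_gt h1u) (ne_of_gt hc0)]
          rw [h3, h4] at h2
          linarith
        have hFt1 : 0 < 1 - F t₀ := by
          simp only [Set.mem_setOf_eq] at ht₀S; linarith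
        have := (Real.log_le_log_iff hFt1 h1u).1 hlogt
        linarith
    exact csInf_le (hbdd u hu0) hmem
  -- monotonicity of quantile on the interval (for integrability)
  have hqmono : MonotoneOn (quantile F) (Set.Icc a (a + x)) := by
    intro u hu v hv huv
    apply csInf_le_csInf (hbdd u (by linarith [hu.1])) (hne v (by linarith [hv.2]))
    intro z hz
    exact le_trans huv hz
  have haax : a ≤ a + x := by linarith
  have hQint : IntervalIntegrable (quantile F) MeasureTheory.volume a (a + x) := by
    apply MonotoneOn.intervalIntegrable
    rwa [Set.uIcc_of_le haax]
  have hφcont : ContinuousOn φ (Set.Icc a (a + x)) := by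
    apply ContinuousOn.sub continuousOn_const
    apply ContinuousOn.mul continuousOn_const
    apply ContinuousOn.log
    · exact ((continuousOn_const.sub continuousOn_id).div_const c)
    · intro u hu
      have : 0 < 1 - u := by have := hu.2; linarith
      positivity
  have hφint : IntervalIntegrable φ MeasureTheory.volume a (a + x) := by
    apply ContinuousOn.intervalIntegrable
    rwa [Set.uIcc_of_le haax]
  have hmono_int := intervalIntegral.integral_mono_on haax hQint hφint hpt
  -- compute ∫ φ
  set G : ℝ → ℝ := fun u => k * u + (c / b) * ((1 - u) * Real.log ((1 - u) / c) - (1 - u)) with hG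
  have hGderiv : ∀ t ∈ Set.uIcc a (a + x), HasDerivAt G (φ t) t := by
    intro t ht
    rw [Set.uIcc_of_le haax] at ht
    have h1t : 0 < 1 - t := by have := ht.2; linarith
    have h1 : HasDerivAt (fun u : ℝ => 1 - u) (-1) t := by
      have := (hasDerivAt_const t (1:ℝ)).sub (hasDerivAt_id t); rw [zero_sub] at this; exact this
    have h2 : HasDerivAt (fun u : ℝ => (1 - u) / c) (-1 / c) t := h1.div_const c
    have h3 : HasDerivAt (fun u : ℝ => Real.log ((1 - u) / c)) (-1 / (1 - t)) t := by
      have := h2.log (by positivity)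
      convert this using 1
      field_simp
    have h4 : HasDerivAt (fun u : ℝ => (1 - u) * Real.log ((1 - u) / c))
        (-1 * Real.log ((1 - t) / c) + (1 - t) * (-1 / (1 - t))) t := h1.mul h3
    have h5 : HasDerivAt G (k * 1 + (c / b) * ((-1 * Real.log ((1 - t) / c) + (1 - t) * (-1 / (1 - t))) - (-1))) t := by
      exact ((hasDerivAt_id t).const_mul k).add (((h4.sub h1)).const_mul (c / b))
    convert h5 using 1
    simp only [hφ]
    field_simp
    ring
  have hint_eq : ∫ u in a..(a + x), φ u = G (a + x) - G a := by
    exact intervalIntegral.integral_eq_sub_of_hasDerivAt hGderiv hφint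
  -- final computation
  have hGval : G (a + x) - G a = k * x + (c / b) * (c - x) * Real.log ((c - x) / c) + (c / b) * x := by
    simp only [hG]
    have e1 : 1 - a = c := hc.symm
    have e2 : 1 - (a + x) = c - x := by rw [← e1]; ring
    rw [e1, e2, div_self (ne_of_gt hc0), Real.log_one]
    ring
  have hgoal_eq : k - g c b (-x) = (1 / x) * ∫ u in a..(a + x), φ u := by
    rw [hint_eq, hGval]
    unfold g
    have e3 : (1:ℝ) + -x / c = (c - x) / c := by field_simp; ring
    rw [e3]
    field_simp
    ring
  rw [hgoal_eq]
  apply mul_le_mul_of_nonneg_left hmono_int (by positivity)
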